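/- Let R = ℤ[s, s⁻¹, t, t⁻¹] be the group ring of the free abelian group with basis {s, t}, and let d₁ : Rℓ → R be the R-linear map with d₁(bₖ) = 1 − s for 1 ≤ k ≤ ℓ−1 and d₁(b_ℓ) = 1 − t. Then ker d₁ is the free R-module with basis {b₁ − b₂, ..., b_{ℓ−2} − b_{ℓ−1}, (1 − t)·b_{ℓ−1} + (s − 1)·b_ℓ}. -/

import Mathlib

/-- `R = ℤ[s,s⁻¹,t,t⁻¹]`, the group ring of the free abelian group with basis `{s, t}`. -/
noncomputable abbrev GroupRingZ2 : Type := AddMonoidAlgebra ℤ (ℤ × ℤ)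

/-- The generator `s` of the group ring. -/
noncomputable def sGen : GroupRingZ2 := AddMonoidAlgebra.single (1, 0) 1

/-- The generator `t` of the group ring. -/
noncomputable def tGen : GroupRingZ2 := AddMonoidAlgebra.single (0, 1) 1

/-- The `R`-linear map `Rⁱ → R` sending the `k`-th standard basis vector to `c k`. -/
noncomputable def rowMap {R : Type*} [CommRing R] {ι : Type*} [Fintype ι] (c : ι → R) :
    (ι → R) →ₗ[R] R where
  toFun x := ∑ k, x k * c k
  map_add' x y := by simp [add_mul, Finset.sum_add_distrib]
  map_smul' r x := by simp [Finset.mul_sum, mul_assoc]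

/-- The claimed basis of the kernel: the differences `b_k − b_{k+1}` for `k < ℓ`,
together with `(1 − t)·b_ℓ + (s − 1)·b_{ℓ+1}`. -/
noncomputable def kerBasisB (ℓ : ℕ) (k : Fin (ℓ + 1)) : Fin (ℓ + 2) → GroupRingZ2 :=
  if (k : ℕ) < ℓ then
    (Pi.single k.castSucc 1 : Fin (ℓ + 2) → GroupRingZ2) -
      (Pi.single k.succ 1 : Fin (ℓ + 2) → GroupRingZ2)
  else
    (1 - tGen) • (Pi.single k.castSucc 1 : Fin (ℓ + 2) → GroupRingZ2) +
      (sGen - 1) • (Pi.single k.succ 1 : Fin (ℓ + 2) → GroupRingZ2)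

lemma GR2_one_eq : (1 : GroupRingZ2) = AddMonoidAlgebra.single ((0:ℤ), (0:ℤ)) 1 :=
  AddMonoidAlgebra.one_def

noncomputable def evT : GroupRingZ2 →+* AddMonoidAlgebra ℤ ℤ :=
  AddMonoidAlgebra.mapDomainRingHom ℤ (AddMonoidHom.fst ℤ ℤ)

noncomputable def iotaS : AddMonoidAlgebra ℤ ℤ →+* GroupRingZ2 :=
  AddMonoidAlgebra.mapDomainRingHom ℤ (AddMonoidHom.inl ℤ ℤ)

lemma evT_single (m n : ℤ) (z : ℤ) :
    evT (AddMonoidAlgebra.single (m, n) z) = AddMonoidAlgebra.single m z := by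
  show AddMonoidAlgebra.mapDomain _ (AddMonoidAlgebra.single (m, n) z) = _
  rw [AddMonoidAlgebra.mapDomain_single]
  rfl

lemma iotaS_single (m : ℤ) (z : ℤ) :
    iotaS (AddMonoidAlgebra.single m z) = AddMonoidAlgebra.single (m, 0) z := by
  show AddMonoidAlgebra.mapDomain _ (AddMonoidAlgebra.single m z) = _
  rw [AddMonoidAlgebra.mapDomain_single]
  rfl

lemma one_sub_tGen_ne_zero : (1 - tGen : GroupRingZ2) ≠ 0 := by
  intro h
  rw [sub_eq_zero, GR2_one_eq, tGen] at h
  rcases AddMonoidAlgebra.single_inj.mp h with ⟨h1, -⟩ | ⟨h1, -⟩ <;>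
    simp_all [Prod.ext_iff]

lemma one_sub_sGen_ne_zero : (1 - sGen : GroupRingZ2) ≠ 0 := by
  intro h
  rw [sub_eq_zero, GR2_one_eq, sGen] at h
  rcases AddMonoidAlgebra.single_inj.mp h with ⟨h1, -⟩ | ⟨h1, -⟩ <;>
    simp_all [Prod.ext_iff]

lemma one_sub_sbar_ne_zero :
    (1 - AddMonoidAlgebra.single (1:ℤ) (1:ℤ) : AddMonoidAlgebra ℤ ℤ) ≠ 0 := by
  intro h
  rw [sub_eq_zero, AddMonoidAlgebra.one_def] at h
  rcases AddMonoidAlgebra.single_inj.mp h with ⟨h1, -⟩ | ⟨h1, -⟩ <;> simp_all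

lemma tpow_dvd (n : ℤ) :
    (1 - tGen) ∣ ((AddMonoidAlgebra.single ((0:ℤ), n) (1:ℤ) : GroupRingZ2) - 1) := by
  induction n using Int.induction_on with
  | zero => rw [GR2_one_eq]; simp
  | succ n ih =>
    have hmul : (AddMonoidAlgebra.single ((0:ℤ), (n:ℤ)) (1:ℤ) : GroupRingZ2) * tGen
        = AddMonoidAlgebra.single ((0:ℤ), (n:ℤ)+1) (1:ℤ) := by
      rw [tGen, AddMonoidAlgebra.single_mul_single]
      norm_num
    have key : (AddMonoidAlgebra.single ((0:ℤ), (n:ℤ)+1) (1:ℤ) : GroupRingZ2) - 1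
        = (AddMonoidAlgebra.single ((0:ℤ), (n:ℤ)) (1:ℤ) - 1) * tGen - (1 - tGen) := by
      rw [← hmul]; ring
    rw [key]
    exact dvd_sub (ih.mul_right _) dvd_rfl
  | pred n ih =>
    have hmul : (AddMonoidAlgebra.single ((0:ℤ), (-n:ℤ)) (1:ℤ) : GroupRingZ2)
          * AddMonoidAlgebra.single ((0:ℤ), (-1:ℤ)) (1:ℤ)
        = AddMonoidAlgebra.single ((0:ℤ), (-(n:ℤ)-1)) (1:ℤ) := by
      rw [AddMonoidAlgebra.single_mul_single]
      norm_num [sub_eq_add_neg]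
    have hinv : (AddMonoidAlgebra.single ((0:ℤ), (-1:ℤ)) (1:ℤ) : GroupRingZ2) - 1
        = AddMonoidAlgebra.single ((0:ℤ), (-1:ℤ)) (1:ℤ) * (1 - tGen) := by
      rw [mul_sub, mul_one, tGen, AddMonoidAlgebra.single_mul_single,
        show ((0:ℤ),(-1:ℤ)) + ((0:ℤ),(1:ℤ)) = ((0:ℤ),(0:ℤ)) by norm_num, mul_one,
        ← GR2_one_eq]
    have key : (AddMonoidAlgebra.single ((0:ℤ), (-(n:ℤ)-1)) (1:ℤ) : GroupRingZ2) - 1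
        = (AddMonoidAlgebra.single ((0:ℤ), (-n:ℤ)) (1:ℤ) - 1)
            * AddMonoidAlgebra.single ((0:ℤ), (-1:ℤ)) (1:ℤ)
          + (AddMonoidAlgebra.single ((0:ℤ), (-1:ℤ)) (1:ℤ) - 1) := by
      rw [← hmul]; ring
    rw [key]
    exact dvd_add (ih.mul_right _) (hinv ▸ Dvd.intro_left _ rfl)

lemma dvd_sub_iota_evT (a : GroupRingZ2) : (1 - tGen) ∣ (a - iotaS (evT a)) := by
  induction a using AddMonoidAlgebra.induction_linear with
  | zero => simp
  | add f g hf hg =>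
    obtain ⟨u, hu⟩ := hf
    obtain ⟨v, hv⟩ := hg
    exact ⟨u + v, by rw [map_add, map_add]; linear_combination hu + hv⟩
  | single p z =>
    obtain ⟨m, n⟩ := p
    show (1 - tGen) ∣ (AddMonoidAlgebra.single (m, n) z : GroupRingZ2)
      - iotaS (evT (AddMonoidAlgebra.single (m, n) z))
    rw [evT_single, iotaS_single]
    have hmul : (AddMonoidAlgebra.single ((m:ℤ), (0:ℤ)) (z:ℤ) : GroupRingZ2)
        * (AddMonoidAlgebra.single ((0:ℤ), n) (1:ℤ) - 1)
        = AddMonoidAlgebra.single (m, n) z - AddMonoidAlgebra.single (m, 0) z := by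
      rw [mul_sub, mul_one, AddMonoidAlgebra.single_mul_single]
      norm_num
    rw [← hmul]
    exact (tpow_dvd n).mul_left _

lemma exists_c (a b : GroupRingZ2) (h : a * (1 - sGen) + b * (1 - tGen) = 0) :
    ∃ c, a = c * (1 - tGen) ∧ b = c * (sGen - 1) := by
  have h2 := congrArg evT h
  simp only [map_add, map_mul, map_sub, map_one, map_zero] at h2
  rw [sGen, tGen, evT_single, evT_single,
    show (AddMonoidAlgebra.single (0:ℤ) (1:ℤ) : AddMonoidAlgebra ℤ ℤ) = 1 from
      AddMonoidAlgebra.one_def.symm, sub_self, mul_zero, add_zero] at h2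
  have hev : evT a = 0 := by
    rcases mul_eq_zero.mp h2 with h' | h'
    · exact h'
    · exact absurd h' one_sub_sbar_ne_zero
  obtain ⟨c, hc⟩ : (1 - tGen) ∣ a := by
    have hd := dvd_sub_iota_evT a
    rwa [hev, map_zero, sub_zero] at hd
  refine ⟨c, by rw [hc]; ring, ?_⟩
  have h3 : (1 - tGen) * (c * (1 - sGen) + b) = 0 := by
    rw [hc] at h; linear_combination h
  rcases mul_eq_zero.mp h3 with h' | h'
  · exact absurd h' one_sub_tGen_ne_zero
  · linear_combination h'

noncomputable def Pcoef (ℓ : ℕ) (k : Fin (ℓ+1)) : GroupRingZ2 :=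
  if (k : ℕ) < ℓ then 1 else 1 - tGen
noncomputable def Qcoef (ℓ : ℕ) (k : Fin (ℓ+1)) : GroupRingZ2 :=
  if (k : ℕ) < ℓ then -1 else sGen - 1

lemma Pcoef_ne_zero (ℓ : ℕ) (k : Fin (ℓ+1)) : Pcoef ℓ k ≠ 0 := by
  unfold Pcoef; split_ifs
  · exact one_ne_zero
  · exact one_sub_tGen_ne_zero

lemma kerBasisB_eq (ℓ : ℕ) (k : Fin (ℓ+1)) :
    kerBasisB ℓ k = Pcoef ℓ k • (Pi.single k.castSucc 1 : Fin (ℓ+2) → GroupRingZ2)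
      + Qcoef ℓ k • (Pi.single k.succ 1 : Fin (ℓ+2) → GroupRingZ2) := by
  unfold kerBasisB Pcoef Qcoef
  split_ifs with h
  · rw [one_smul, neg_one_smul, ← sub_eq_add_neg]
  · rfl

lemma aux_sum1 (ℓ : ℕ) (f : Fin (ℓ+1) → GroupRingZ2) (m : Fin (ℓ+2)) :
    (∑ k, if m = k.castSucc then f k else 0)
      = if h : (m : ℕ) < ℓ+1 then f ⟨m, h⟩ else 0 := by
  split_ifs with h
  · have hcond : ∀ k : Fin (ℓ+1), (m = k.castSucc) ↔ (k = ⟨m, h⟩) := by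
      intro k; rw [Fin.ext_iff, Fin.ext_iff]; simp; omega
    simp_rw [hcond]
    simp [Finset.sum_ite_eq']
  · rw [Finset.sum_eq_zero]
    intro k _
    rw [if_neg]
    intro e
    rw [Fin.ext_iff] at e
    simp at e
    omega

lemma aux_sum2 (ℓ : ℕ) (f : Fin (ℓ+1) → GroupRingZ2) (m : Fin (ℓ+2)) :
    (∑ k, if m = k.succ then f k else 0)
      = if h : 0 < (m : ℕ) ∧ (m : ℕ) - 1 < ℓ+1 then f ⟨(m : ℕ) - 1, h.2⟩ else 0 := by
  split_ifs with h
  · have hcond : ∀ k : Fin (ℓ+1), (m = k.succ) ↔ (k = ⟨(m : ℕ) - 1, h.2⟩) := by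
      intro k; rw [Fin.ext_iff, Fin.ext_iff]; simp [Fin.val_succ]; omega
    simp_rw [hcond]
    simp [Finset.sum_ite_eq']
  · rw [Finset.sum_eq_zero]
    intro k _
    rw [if_neg]
    intro e
    rw [Fin.ext_iff] at e
    simp [Fin.val_succ] at e
    omega

lemma comb_apply (ℓ : ℕ) (a : Fin (ℓ+1) → GroupRingZ2) (m : Fin (ℓ+2)) :
    (∑ k, a k • kerBasisB ℓ k) m =
      (if h : (m : ℕ) < ℓ+1 then a ⟨m, h⟩ * Pcoef ℓ ⟨m, h⟩ else 0) +
      (if h : 0 < (m : ℕ) ∧ (m : ℕ) - 1 < ℓ+1 then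
        a ⟨(m : ℕ) - 1, h.2⟩ * Qcoef ℓ ⟨(m : ℕ) - 1, h.2⟩ else 0) := by
  have expand : ∀ k : Fin (ℓ+1), (a k • kerBasisB ℓ k) m
      = (if m = k.castSucc then a k * Pcoef ℓ k else 0)
        + (if m = k.succ then a k * Qcoef ℓ k else 0) := by
    intro k
    rw [kerBasisB_eq]
    simp only [Pi.add_apply, Pi.smul_apply, Pi.single_apply, smul_eq_mul, smul_ite,
      mul_ite, mul_one, mul_zero, smul_zero]
    split_ifs <;> ring
  rw [Finset.sum_apply]
  simp_rw [expand]
  rw [Finset.sum_add_distrib, aux_sum1, aux_sum2]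

lemma rowMap_single {R : Type*} [CommRing R] {ι : Type*} [Fintype ι] [DecidableEq ι]
    (c : ι → R) (i : ι) (r : R) : rowMap c (Pi.single i r) = r * c i := by
  simp [rowMap, Pi.single_apply, ite_mul, Finset.sum_ite_eq']

lemma rowMap_eq (ℓ : ℕ) (x : Fin (ℓ+2) → GroupRingZ2) :
    rowMap (fun k : Fin (ℓ + 2) => if (k : ℕ) < ℓ + 1 then 1 - sGen else 1 - tGen) x
      = (∑ k : Fin (ℓ+1), x k.castSucc) * (1 - sGen) + x (Fin.last (ℓ+1)) * (1 - tGen) := by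
  show (∑ k : Fin (ℓ+2), x k * _) = _
  rw [Fin.sum_univ_castSucc, Finset.sum_mul]
  congr 1
  · apply Finset.sum_congr rfl
    intro k _
    rw [if_pos]
    simp only [Fin.coe_castSucc]
    exact k.isLt
  · rw [if_neg]
    simp


/-- Let `R = ℤ[s,s⁻¹,t,t⁻¹]` and let `d₁ : R^(ℓ+2) → R` send the first `ℓ+1` standard
basis vectors to `1 − s` and the last one to `1 − t`.  Then `ker d₁` is the free
`R`-module with basis `b₁ − b₂, …, b_ℓ − b_{ℓ+1}, (1 − t)·b_{ℓ+1} + (s − 1)·b_{ℓ+2}`. -/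
theorem ker_d1_type_B (ℓ : ℕ) :
    LinearMap.ker
        (rowMap fun k : Fin (ℓ + 2) => if (k : ℕ) < ℓ + 1 then 1 - sGen else 1 - tGen) =
        Submodule.span GroupRingZ2 (Set.range (kerBasisB ℓ)) ∧
      LinearIndependent GroupRingZ2 (kerBasisB ℓ) := by
  constructor
  · apply le_antisymm
    · -- ker ⊆ span
      intro x hx
      rw [LinearMap.mem_ker, rowMap_eq] at hx
      obtain ⟨c, hc1, hc2⟩ := exists_c _ _ hx
      classical
      set x' : ℕ → GroupRingZ2 := fun j => if h : j < ℓ+2 then x ⟨j, h⟩ else 0 with hx'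
      set A : ℕ → GroupRingZ2 := fun n => ∑ j ∈ Finset.range (n+1), x' j with hA
      have hx'eq : ∀ (n : ℕ) (h : n < ℓ+2), x' n = x ⟨n, h⟩ := fun n h => dif_pos h
      have hAsucc : ∀ n : ℕ, A (n+1) = A n + x' (n+1) := fun n => Finset.sum_range_succ x' (n+1)
      have hA0 : A 0 = x' 0 := by simp [hA]
      have hAl : A ℓ = ∑ k : Fin (ℓ+1), x k.castSucc := by
        show ∑ j ∈ Finset.range (ℓ+1), x' j = _
        rw [← Fin.sum_univ_eq_sum_range x' (ℓ+1)]
        exact Finset.sum_congr rfl fun k _ =>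
          hx'eq k (k.isLt.trans (Nat.lt_succ_self _))
      set a : Fin (ℓ+1) → GroupRingZ2 := fun k => if (k:ℕ) < ℓ then A k else c with ha
      have hxeq : x = ∑ k, a k • kerBasisB ℓ k := by
        funext m
        rw [comb_apply]
        have hxm : x' (m:ℕ) = x m := dif_pos m.isLt
        by_cases hm : (m:ℕ) < ℓ+1
        · rw [dif_pos hm]
          have haP : a ⟨(m:ℕ), hm⟩ * Pcoef ℓ ⟨(m:ℕ), hm⟩ =
              if (m:ℕ) < ℓ then A (m:ℕ) else c * (1 - tGen) := by
            show (if (m:ℕ) < ℓ then A (m:ℕ) else c) * (if (m:ℕ) < ℓ then 1 else 1 - tGen) = _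
            split_ifs <;> ring
          rcases Nat.eq_zero_or_pos (m:ℕ) with h0 | h0
          · rw [dif_neg (by omega), add_zero, haP]
            rw [h0]
            by_cases hl : 0 < ℓ
            · rw [if_pos hl, hA0, show (0:ℕ) = (m:ℕ) from h0.symm, hxm]
            · rw [if_neg hl, ← hc1]
              have hl0 : ℓ = 0 := by omega
              subst hl0
              rw [Fin.sum_univ_one, ← hxm, h0]
              rfl
          · have hprev : (m:ℕ) - 1 < ℓ := by omega
            rw [dif_pos ⟨h0, by omega⟩]
            have haQ : a ⟨(m:ℕ)-1, by omega⟩ * Qcoef ℓ ⟨(m:ℕ)-1, by omega⟩ = -A ((m:ℕ)-1) := by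
              show (if (m:ℕ)-1 < ℓ then A ((m:ℕ)-1) else c) *
                  (if (m:ℕ)-1 < ℓ then -1 else sGen - 1) = _
              rw [if_pos hprev, if_pos hprev]; ring
            rw [haP, haQ]
            have hrec : A (m:ℕ) = A ((m:ℕ)-1) + x' (m:ℕ) := by
              have := hAsucc ((m:ℕ)-1)
              rwa [Nat.sub_add_cancel h0] at this
            by_cases hml : (m:ℕ) < ℓ
            · rw [if_pos hml, hrec, hxm]; ring
            · have hmeq : (m:ℕ) = ℓ := by omega
              rw [if_neg hml, ← hc1, ← hAl, show A ℓ = A (m:ℕ) from by rw [hmeq]]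
              linear_combination -hrec - hxm
        · -- m = last
          have hmeq : (m:ℕ) = ℓ+1 := by omega
          rw [dif_neg hm, dif_pos ⟨by omega, by omega⟩, zero_add]
          have haQ : a ⟨(m:ℕ)-1, by omega⟩ * Qcoef ℓ ⟨(m:ℕ)-1, by omega⟩ = c * (sGen - 1) := by
            show (if (m:ℕ)-1 < ℓ then A ((m:ℕ)-1) else c) *
                (if (m:ℕ)-1 < ℓ then -1 else sGen - 1) = _
            rw [if_neg (by omega), if_neg (by omega)]
          rw [haQ, ← hc2]
          congr 1
          exact (Fin.ext hmeq : m = Fin.last (ℓ+1))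
      rw [hxeq]
      exact Submodule.sum_mem _ fun k _ =>
        Submodule.smul_mem _ _ (Submodule.subset_span ⟨k, rfl⟩)
    · -- span ⊆ ker
      rw [Submodule.span_le]
      rintro _ ⟨k, rfl⟩
      simp only [SetLike.mem_coe, LinearMap.mem_ker]
      rw [kerBasisB_eq, map_add, LinearMap.map_smul, LinearMap.map_smul,
        rowMap_single, rowMap_single, one_mul, one_mul]
      simp only [Fin.coe_castSucc, Fin.val_succ, smul_eq_mul]
      by_cases hk : (k:ℕ) < ℓ
      · rw [if_pos (by omega), if_pos (by omega)]
        show (if (k:ℕ) < ℓ then (1:GroupRingZ2) else 1 - tGen) * _ +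
          (if (k:ℕ) < ℓ then (-1:GroupRingZ2) else sGen - 1) * _ = 0
        rw [if_pos hk, if_pos hk]; ring
      · have hkeq : (k:ℕ) = ℓ := by omega
        rw [if_pos (by omega), if_neg (by omega)]
        show (if (k:ℕ) < ℓ then (1:GroupRingZ2) else 1 - tGen) * _ +
          (if (k:ℕ) < ℓ then (-1:GroupRingZ2) else sGen - 1) * _ = 0
        rw [if_neg hk, if_neg hk]; ring
  · -- linear independence
    rw [Fintype.linearIndependent_iff]
    intro a ha
    have key : ∀ n, ∀ h : n < ℓ+1, a ⟨n, h⟩ = 0 := by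
      intro n
      induction n using Nat.strong_induction_on with
      | _ n ih =>
        intro h
        have hm := congrFun ha (⟨n, by omega⟩ : Fin (ℓ+2))
        rw [comb_apply, Pi.zero_apply] at hm
        simp only [] at hm
        rw [dif_pos (show ((⟨n, by omega⟩ : Fin (ℓ+2)) : ℕ) < ℓ+1 from h)] at hm
        rcases Nat.eq_zero_or_pos n with h0 | h0
        · subst h0
          rw [dif_neg (by simp), add_zero] at hm
          rcases mul_eq_zero.mp hm with h' | h'
          · exact h'
          · exact absurd h' (Pcoef_ne_zero ℓ _)
        · rw [dif_pos ⟨h0, by omega⟩] at hm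
          simp only [ih (n-1) (by omega) (by omega), zero_mul, add_zero] at hm
          rcases mul_eq_zero.mp hm with h' | h'
          · exact h'
          · exact absurd h' (Pcoef_ne_zero ℓ _)
    intro i
    have := key i.val i.isLt
    rwa [Fin.eta] at this
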